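/- Let z be a complex number with 0 < |z| ≤ 1 and arg(z) ∈ [0, π/r] for an integer r ≥ 2, and set a = sin(π/(2r)). Then a²r²(1 − Re z) ≥ 1 − (1−a²)|z|² − a²·Re(z^r). -/

import Mathlib

open Real
set_option maxHeartbeats 1000000

lemma aux_sin_nat_mul (n : ℕ) (x : ℝ) (hx : 0 ≤ x) (h : (n : ℝ) * x ≤ π) :
    sin ((n : ℝ) * x) ≤ n * sin x := by
  induction n with
  | zero => simp
  | succ k ih =>
    have hkc : (0:ℝ) ≤ (k:ℝ) := by positivity
    have hk : (k : ℝ) * x ≤ π := by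
      have : (k : ℝ) * x ≤ (k + 1 : ℝ) * x := by nlinarith
      push_cast at h ⊢; linarith
    have ih' := ih hk
    have hsk : 0 ≤ sin ((k : ℝ) * x) := sin_nonneg_of_nonneg_of_le_pi (by positivity) hk
    have hsx : 0 ≤ sin x := by
      apply sin_nonneg_of_nonneg_of_le_pi hx
      push_cast at h; nlinarith
    have hadd : sin ((k + 1 : ℝ) * x) = sin ((k : ℝ) * x) * cos x + cos ((k : ℝ) * x) * sin x := by
      rw [add_mul, one_mul, sin_add]
    push_cast
    rw [hadd]
    have h1 : sin ((k : ℝ) * x) * cos x ≤ sin ((k : ℝ) * x) := by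
      nlinarith [cos_le_one x]
    have h2 : cos ((k : ℝ) * x) * sin x ≤ sin x := by
      nlinarith [cos_le_one ((k : ℝ) * x)]
    linarith

lemma aux_one_sub_pow (k : ℕ) (ρ : ℝ) (h0 : 0 ≤ ρ) (h1 : ρ ≤ 1) :
    1 - ρ ^ k ≤ k * (1 - ρ) := by
  induction k with
  | zero => simp
  | succ m ih =>
    have hp : 0 ≤ ρ ^ m := by positivity
    have hp1 : ρ ^ m ≤ 1 := pow_le_one₀ h0 h1
    push_cast
    rw [pow_succ]
    nlinarith

lemma aux_a4 (t : ℝ) (ht : 4 ≤ t) :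
    2 ≤ sin (π / (2 * t)) ^ 2 * (t ^ 2 - t + 2) := by
  have ht0 : (0 : ℝ) < t := by linarith
  have hπ1 := pi_gt_d6
  have hπ2 := pi_lt_d6
  have habs : |π / t| = π / t := abs_of_nonneg (by positivity)
  have hx1 : |π / t| ≤ 1 := by
    rw [habs, div_le_one ht0]; linarith
  have hcb := (abs_le.mp (cos_bound hx1)).2
  rw [habs] at hcb
  have hcos : cos (π / t) ≤ 1 - (π / t) ^ 2 / 2 + (π / t) ^ 4 * (5 / 96) := by linarith
  have hsq : sin (π / (2 * t)) ^ 2 = 1 / 2 - cos (π / t) / 2 := by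
    rw [sin_sq_eq_half_sub]
    congr 2
    field_simp
  rw [hsq]
  have hQ : (0:ℝ) ≤ t ^ 2 - t + 2 := by nlinarith
  have hπsq : (9.8696 : ℝ) ≤ π ^ 2 := by nlinarith
  have hπsq2 : π ^ 2 ≤ 9.8696068 := by nlinarith [pi_pos]
  have hπ4 : π ^ 4 ≤ (97.4095 : ℝ) := by nlinarith [sq_nonneg π]
  have h1 : (9.8696 / 2 * t ^ 2 - 97.4095 * (5 / 96)) ≤ (π ^ 2 / 2 * t ^ 2 - π ^ 4 * (5 / 96)) := by
    nlinarith [mul_le_mul_of_nonneg_left hπsq (sq_nonneg t)]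
  have h2 : (9.8696 / 2 * t ^ 2 - 97.4095 * (5 / 96)) * (t ^ 2 - t + 2)
      ≤ (π ^ 2 / 2 * t ^ 2 - π ^ 4 * (5 / 96)) * (t ^ 2 - t + 2) :=
    mul_le_mul_of_nonneg_right h1 hQ
  have h4' : (0:ℝ) ≤ t - 4 := by linarith
  have base : 4 * t ^ 4 ≤ (9.8696 / 2 * t ^ 2 - 97.4095 * (5 / 96)) * (t ^ 2 - t + 2) := by
    nlinarith [h4', sq_nonneg (t - 4), mul_nonneg (mul_nonneg h4' h4') h4',
      mul_nonneg (sq_nonneg (t - 4)) (sq_nonneg (t - 4))]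
  have key : 4 * t ^ 4 ≤ (π ^ 2 / 2 * t ^ 2 - π ^ 4 * (5 / 96)) * (t ^ 2 - t + 2) := by
    linarith
  have e : ((π / t) ^ 2 / 2 - (π / t) ^ 4 * (5 / 96)) * (t ^ 2 - t + 2)
      = ((π ^ 2 / 2 * t ^ 2 - π ^ 4 * (5 / 96)) * (t ^ 2 - t + 2)) / t ^ 4 := by
    field_simp
  have h4 : 4 ≤ ((π / t) ^ 2 / 2 - (π / t) ^ 4 * (5 / 96)) * (t ^ 2 - t + 2) := by
    rw [e, le_div_iff₀ (by positivity)]; linarith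
  have hc : (π / t) ^ 2 / 2 - (π / t) ^ 4 * (5 / 96) ≤ 1 - cos (π / t) := by linarith
  have := mul_le_mul_of_nonneg_right hc hQ
  linarith

lemma aux_a (r : ℕ) (hr : 2 ≤ r) :
    2 ≤ sin (π / (2 * r)) ^ 2 * ((r : ℝ) ^ 2 - r + 2) := by
  match r, hr with
  | 2, _ =>
    have h : (Real.sqrt 2 / 2) ^ 2 = 1 / 2 := by
      rw [div_pow, Real.sq_sqrt] <;> norm_num
    norm_num [show (2:ℝ) * 2 = 4 by norm_num, sin_pi_div_four, h]
  | 3, _ => norm_num [show (2:ℝ) * 3 = 6 by norm_num, sin_pi_div_six]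
  | (m + 4), _ =>
    have ht : (4 : ℝ) ≤ ((m + 4 : ℕ) : ℝ) := by push_cast; linarith [Nat.cast_nonneg (α := ℝ) m]
    exact aux_a4 _ ht

theorem stmt6 (r : ℕ) (hr : 2 ≤ r) (z : ℂ)
    (hz0 : 0 < ‖z‖) (hz1 : ‖z‖ ≤ 1)
    (harg0 : 0 ≤ z.arg) (harg1 : z.arg ≤ π / r) :
    1 - (1 - sin (π / (2 * r)) ^ 2) * ‖z‖ ^ 2
      - sin (π / (2 * r)) ^ 2 * (z ^ r).re
    ≤ sin (π / (2 * r)) ^ 2 * (r : ℝ) ^ 2 * (1 - z.re) := by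
  set θ := z.arg with hθdef
  set ρ := ‖z‖ with hρdef
  set s := sin (π / (2 * r)) ^ 2 with hsdef
  have hρ0 : 0 ≤ ρ := hz0.le
  have hz : z ≠ 0 := by
    have h := hz0.ne'
    rw [hρdef] at h
    exact norm_ne_zero_iff.mp h
  have hn2 : (2:ℝ) ≤ (r:ℝ) := by exact_mod_cast hr
  have hn0 : (0:ℝ) < (r:ℝ) := by linarith
  have hre : z.re = ρ * Real.cos θ := by
    rw [hρdef, hθdef, Complex.cos_arg hz]
    field_simp
  have hθπ : (r:ℝ) * θ ≤ π := by
    calc (r:ℝ) * θ ≤ (r:ℝ) * (π / r) := by nlinarith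
    _ = π := by field_simp
  have hθpi : θ ≤ π := by nlinarith [pi_pos]
  have hzr : (z ^ r).re = ρ ^ r * Real.cos ((r:ℝ) * θ) := by
    conv_lhs => rw [← Complex.norm_mul_exp_arg_mul_I z]
    rw [mul_pow, ← Complex.exp_nat_mul,
      show ((r:ℂ)) * (↑θ * Complex.I) = ((((r:ℝ) * θ : ℝ)) : ℂ) * Complex.I by push_cast; ring,
      show ((ρ:ℂ)) ^ r = (((ρ ^ r : ℝ)) : ℂ) by push_cast; rfl,
      Complex.re_ofReal_mul, Complex.exp_ofReal_mul_I_re]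
  -- F2 : 1 - cos (rθ) ≤ r² (1 - cos θ)
  have hsinhalf : 0 ≤ Real.sin (θ / 2) :=
    sin_nonneg_of_nonneg_of_le_pi (by linarith) (by linarith)
  have hsmul := aux_sin_nat_mul r (θ / 2) (by linarith) (by nlinarith)
  have hsmul0 : 0 ≤ Real.sin ((r:ℝ) * (θ / 2)) :=
    sin_nonneg_of_nonneg_of_le_pi (by positivity) (by nlinarith)
  have hsq2 : Real.sin ((r:ℝ) * (θ / 2)) ^ 2 ≤ ((r:ℝ) * Real.sin (θ / 2)) ^ 2 :=
    pow_le_pow_left₀ hsmul0 hsmul 2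
  have e1 : Real.sin ((r:ℝ) * (θ / 2)) ^ 2 = 1 / 2 - Real.cos ((r:ℝ) * θ) / 2 := by
    rw [sin_sq_eq_half_sub, show 2 * ((r:ℝ) * (θ / 2)) = (r:ℝ) * θ by ring]
  have e2 : Real.sin (θ / 2) ^ 2 = 1 / 2 - Real.cos θ / 2 := by
    rw [sin_sq_eq_half_sub, show 2 * (θ / 2) = θ by ring]
  have F2 : 1 - Real.cos ((r:ℝ) * θ) ≤ (r:ℝ) ^ 2 * (1 - Real.cos θ) := by nlinarith
  -- F1
  have F1 := aux_a r hr
  rw [← hsdef] at F1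
  -- F3
  have F3 : 1 - ρ ^ (r - 2) ≤ ((r:ℝ) - 2) * (1 - ρ) := by
    have := aux_one_sub_pow (r - 2) ρ hρ0 hz1
    have hc : ((r - 2 : ℕ) : ℝ) = (r:ℝ) - 2 := by
      push_cast [Nat.cast_sub hr]; ring
    rw [hc] at this; exact this
  set p := ρ ^ (r - 2) with hpdef
  have hpρ : ρ ^ r = ρ ^ 2 * p := by
    rw [hpdef, ← pow_add]
    congr 1
    omega
  have hp0 : 0 ≤ p := by positivity
  have hp1 : p ≤ 1 := pow_le_one₀ hρ0 hz1
  set c1 := Real.cos θ with hc1def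
  set cr := Real.cos ((r:ℝ) * θ) with hcrdef
  have hc1 : c1 ≤ 1 := cos_le_one θ
  have hcr1 : cr ≤ 1 := cos_le_one _
  have hcr2 : -1 ≤ cr := neg_one_le_cos _
  have hs0 : 0 ≤ s := sq_nonneg _
  rw [hre, hzr, hpρ]
  have hA : 0 ≤ (1 - ρ) * (s * ((r:ℝ) ^ 2 - r + 2) - 2) :=
    mul_nonneg (by linarith) (by linarith)
  have hB : 0 ≤ s * ρ * ((r:ℝ) ^ 2 * (1 - c1) - (1 - cr)) :=
    mul_nonneg (mul_nonneg hs0 hρ0) (by linarith)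
  have hC : 0 ≤ s * (ρ - ρ ^ 2 * p) * (1 - cr) := by
    have : ρ ^ 2 * p ≤ ρ := by nlinarith
    exact mul_nonneg (mul_nonneg hs0 (by linarith)) (by linarith)
  have hD : 0 ≤ s * (((r:ℝ) - 2) * (1 - ρ) - (1 - p)) :=
    mul_nonneg hs0 (by linarith)
  have hE : 0 ≤ s * (1 - ρ ^ 2) * (1 - p) :=
    mul_nonneg (mul_nonneg hs0 (by nlinarith)) (by linarith)
  have hG : 0 ≤ (1 - ρ) ^ 2 := sq_nonneg _
  linarith only [hA, hB, hC, hD, hE, hG]
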